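/- Consider the generalized multi-instance PLL setting where σ : Y^M → 2^{Y^M} is a random set-valued function containing the gold vector, with M-ambiguity degree γ = sup over (x,y) in the support of D^M and distinct diagonal vectors y' ≠ y of P(y' ∈ s) . If γ < 1, then for any classifier f: R^{01}(f) ≤ (c^{2M−2} · R^{01}_P(f;σ))^{1/M} / (1 − γ). -/

import Mathlib

open scoped ENNReal

attribute [local instance] Classical.propDecidable


lemma aux_pow_sum_le {ι : Type*} (s : Finset ι) (f : ι → ℝ≥0∞) (n : ℕ) :
    (∑ i ∈ s, f i) ^ (n+1) ≤ (s.card : ℝ≥0∞) ^ n * ∑ i ∈ s, f i ^ (n+1) := by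
  by_cases h : ∀ i ∈ s, f i ≠ ∞
  · have key : (∑ i ∈ s, (f i).toNNReal) ^ (n+1)
        ≤ (s.card : NNReal) ^ n * ∑ i ∈ s, (f i).toNNReal ^ (n+1) :=
      pow_sum_le_card_mul_sum_pow (fun i _ => zero_le) n
    have key2 := (ENNReal.coe_le_coe).2 key
    push_cast at key2
    have e1 : (∑ i ∈ s, f i) = ∑ i ∈ s, ((f i).toNNReal : ℝ≥0∞) :=
      Finset.sum_congr rfl fun i hi => (ENNReal.coe_toNNReal (h i hi)).symm
    have e2 : (∑ i ∈ s, f i ^ (n+1)) = ∑ i ∈ s, ((f i).toNNReal : ℝ≥0∞) ^ (n+1) :=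
      Finset.sum_congr rfl fun i hi => by rw [ENNReal.coe_toNNReal (h i hi)]
    rw [e1, e2]
    exact_mod_cast key2
  · push_neg at h
    obtain ⟨i, hi, hfi⟩ := h
    have h1 : (∑ j ∈ s, f j ^ (n+1)) = ∞ := by
      refine eq_top_iff.2 (le_trans ?_ (Finset.single_le_sum (fun j _ => zero_le) hi))
      simp [hfi, ENNReal.top_pow]
    rw [h1, ENNReal.mul_top]
    · exact le_top
    · have : 0 < s.card := Finset.card_pos.2 ⟨i, hi⟩
      positivity

lemma aux_tsum_pi_prod {α : Type*} (h : α → ℝ≥0∞) :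
    ∀ n, ∑' w : Fin n → α, ∏ i, h (w i) = (∑' z, h z) ^ n := by
  intro n
  induction n with
  | zero =>
    simp only [Finset.univ_eq_empty, Finset.prod_empty, pow_zero]
    haveI : Unique (Fin 0 → α) := ⟨⟨fun i => i.elim0⟩, fun w => funext fun i => i.elim0⟩
    rw [tsum_eq_single default (fun w hw => absurd (Subsingleton.elim w default) hw)]
  | succ n ih =>
    rw [pow_succ, ← ih]
    rw [← (Fin.consEquiv (fun _ : Fin (n+1) => α)).tsum_eq]
    have step : ∀ p : α × (Fin n → α),
        (∏ i, h ((Fin.consEquiv (fun _ : Fin (n+1) => α)) p i)) = h p.1 * ∏ i, h (p.2 i) := by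
      rintro ⟨a, v⟩
      have hfun : (fun i => h ((Fin.cons a v : Fin (n+1) → α) i))
          = (Fin.cons (h a) (fun i => h (v i)) : Fin (n+1) → ℝ≥0∞) := by
        ext i; refine Fin.cases ?_ ?_ i <;> simp
      calc ∏ i, h ((Fin.consEquiv (fun _ : Fin (n+1) => α)) (a, v) i)
          = ∏ i, (Fin.cons (h a) (fun j => h (v j)) : Fin (n+1) → ℝ≥0∞) i :=
            Finset.prod_congr rfl fun i _ => congrFun hfun i
        _ = h a * ∏ i, h (v i) := Fin.prod_cons _ _
    rw [tsum_congr step,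
      (ENNReal.tsum_prod (f := fun (a : α) (v : Fin n → α) => h a * ∏ i, h (v i)))]
    calc ∑' (a : α) (v : Fin n → α), h a * ∏ i, h (v i)
        = ∑' (a : α), h a * ∑' (v : Fin n → α), ∏ i, h (v i) :=
          tsum_congr fun a => ENNReal.tsum_mul_left
      _ = (∑' v : Fin n → α, ∏ i, h (v i)) * ∑' z, h z := by
          rw [ENNReal.tsum_mul_right, mul_comm]

/-- Generalized multi-instance PLL with a stochastic set-valued transition `κ`
containing the gold vector: if the `M`-ambiguity degree is at most `γ < 1`, then
`R⁰¹(f) ≤ (c^(2M−2) · R_P(f))^(1/M) / (1 − γ)`. -/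
theorem stmt14 {X Y : Type*} [Fintype Y] [DecidableEq Y]
    (c M : ℕ) (hc : Fintype.card Y = c) (hM : 1 ≤ M)
    (D : PMF (X × Y)) (f : X → Y)
    (κ : (Fin M → Y) → PMF (Set (Fin M → Y)))
    (hgold : ∀ (y : Fin M → Y) (s : Set (Fin M → Y)), κ y s ≠ 0 → y ∈ s)
    (γ : ℝ≥0∞) (hγ : γ < 1)
    (hamb : ∀ l l' : Y, l ≠ l' → (∃ x : X, D (x, l) ≠ 0) →
      (∑' s : Set (Fin M → Y),
        if (fun _ : Fin M => l') ∈ s then κ (fun _ => l) s else 0) ≤ γ) :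
    (∑' z : X × Y, if f z.1 ≠ z.2 then D z else 0)
      ≤ ((c : ℝ≥0∞) ^ (2 * M - 2) *
          ∑' w : Fin M → X × Y,
            (∏ i, D (w i)) *
              (∑' s : Set (Fin M → Y),
                κ (fun i => (w i).2) s *
                  (if (fun i => f (w i).1) ∈ s then 0 else 1)))
        ^ ((M : ℝ)⁻¹) / (1 - γ) := by
  classical
  set R : ℝ≥0∞ := ∑' z : X × Y, if f z.1 ≠ z.2 then D z else 0 with hR
  set Q : (Fin M → X × Y) → ℝ≥0∞ := fun w =>
    ∑' s : Set (Fin M → Y), κ (fun i => (w i).2) s * (if (fun i => f (w i).1) ∈ s then 0 else 1)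
    with hQ
  set RP : ℝ≥0∞ := ∑' w : Fin M → X × Y, (∏ i, D (w i)) * Q w with hRP
  set P : Y × Y → ℝ≥0∞ := fun q => ∑' x : X, (if f x = q.2 then D (x, q.1) else 0) with hP
  set pairs : Finset (Y × Y) := Finset.univ.filter (fun q : Y × Y => q.1 ≠ q.2) with hpairs
  set hfun : (Y × Y) → (X × Y) → ℝ≥0∞ := fun q z =>
    if z.2 = q.1 ∧ f z.1 = q.2 then D z else 0 with hhfun
  -- Step A : R = ∑ over pairs of P q
  have stepA : R = ∑ q ∈ pairs, P q := by
    have swap : ∑ q ∈ pairs, P q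
        = ∑' x : X, ∑ q ∈ pairs, (if f x = q.2 then D (x, q.1) else 0) :=
      (Summable.tsum_finsetSum (fun _ _ => ENNReal.summable)).symm
    rw [hR, ENNReal.tsum_prod (f := fun x y => if f x ≠ y then D (x, y) else 0), swap]
    refine tsum_congr fun x => ?_
    rw [tsum_fintype, hpairs, Finset.sum_filter, Fintype.sum_prod_type]
    refine Finset.sum_congr rfl fun l _ => ?_
    have hcomm : ∀ l' : Y,
        (if (l, l').1 ≠ (l, l').2 then (if f x = l' then D (x, l) else 0) else 0)
          = (if f x = l' then (if l ≠ l' then D (x, l) else 0) else 0) := by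
      intro l'; by_cases h1 : l ≠ l' <;> by_cases h2 : f x = l' <;> simp [h1, h2]
    rw [Finset.sum_congr rfl fun l' _ => hcomm l', Finset.sum_ite_eq]
    by_cases h : f x = l
    · simp [h]
    · simp [h, Ne.symm h]
  -- P as tsum of hfun
  have hPh : ∀ q : Y × Y, (∑' z : X × Y, hfun q z) = P q := by
    intro q
    rw [hhfun, hP,
      ENNReal.tsum_prod (f := fun x y => if y = q.1 ∧ f x = q.2 then D (x, y) else 0)]
    refine tsum_congr fun x => ?_
    rw [tsum_fintype]
    have hcomm : ∀ y : Y,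
        (if y = q.1 ∧ f x = q.2 then D (x, y) else 0)
          = (if y = q.1 then (if f x = q.2 then D (x, y) else 0) else 0) := by
      intro y; by_cases h1 : y = q.1 <;> by_cases h2 : f x = q.2 <;> simp [h1, h2]
    rw [Finset.sum_congr rfl fun y _ => hcomm y, Finset.sum_ite_eq']
    simp
  -- Step B : R ^ M ≤ c^(2M-2) * ∑ P^M
  have stepB : R ^ M ≤ (c : ℝ≥0∞) ^ (2 * M - 2) * ∑ q ∈ pairs, P q ^ M := by
    obtain ⟨m, rfl⟩ : ∃ m, M = m + 1 := ⟨M - 1, by omega⟩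
    have hcard : (pairs.card : ℝ≥0∞) ≤ (c : ℝ≥0∞) ^ 2 := by
      have h1 : pairs.card ≤ c ^ 2 := by
        calc pairs.card ≤ (Finset.univ : Finset (Y × Y)).card := Finset.card_filter_le _ _
          _ = c ^ 2 := by
            rw [Finset.card_univ, Fintype.card_prod, hc]; ring
      exact_mod_cast h1
    calc R ^ (m + 1) = (∑ q ∈ pairs, P q) ^ (m + 1) := by rw [stepA]
      _ ≤ (pairs.card : ℝ≥0∞) ^ m * ∑ q ∈ pairs, P q ^ (m + 1) := aux_pow_sum_le _ _ m
      _ ≤ ((c : ℝ≥0∞) ^ 2) ^ m * ∑ q ∈ pairs, P q ^ (m + 1) :=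
          by gcongr
      _ = (c : ℝ≥0∞) ^ (2 * (m + 1) - 2) * ∑ q ∈ pairs, P q ^ (m + 1) := by
          rw [← pow_mul, show 2 * (m + 1) - 2 = 2 * m from by omega]
  -- Step C : (∑ P^M) * (1 - γ) ≤ RP
  have stepC : (∑ q ∈ pairs, P q ^ M) * (1 - γ) ≤ RP := by
    have i0 : Fin M := ⟨0, hM⟩
    have prodh : ∀ (q : Y × Y) (w : Fin M → X × Y),
        (∏ i, hfun q (w i))
          = if (∀ i : Fin M, (w i).2 = q.1 ∧ f (w i).1 = q.2) then ∏ i, D (w i) else 0 := by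
      intro q w
      by_cases hA : ∀ i : Fin M, (w i).2 = q.1 ∧ f (w i).1 = q.2
      · rw [if_pos hA]
        exact Finset.prod_congr rfl fun i _ => if_pos (hA i)
      · rw [if_neg hA]
        obtain ⟨i, hi⟩ := not_forall.1 hA
        exact Finset.prod_eq_zero (Finset.mem_univ i) (if_neg hi)
    have Qbound : ∀ q ∈ pairs, P q ≠ 0 → ∀ w : Fin M → X × Y,
        (∀ i : Fin M, (w i).2 = q.1 ∧ f (w i).1 = q.2) → (1 - γ) ≤ Q w := by
      intro q hq hPq w hw
      have hne : q.1 ≠ q.2 := (Finset.mem_filter.1 hq).2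
      have hex : ∃ x : X, D (x, q.1) ≠ 0 := by
        by_contra hno
        push_neg at hno
        apply hPq
        rw [hP]
        refine ENNReal.tsum_eq_zero.2 fun x => ?_
        by_cases h2 : f x = q.2 <;> simp [h2, hno x]
      have hγb := hamb q.1 q.2 hne hex
      have hy : (fun i => (w i).2) = (fun _ : Fin M => q.1) := funext fun i => (hw i).1
      have hf' : (fun i => f (w i).1) = (fun _ : Fin M => q.2) := funext fun i => (hw i).2
      have hQw : Q w = ∑' s : Set (Fin M → Y),
          κ (fun _ : Fin M => q.1) s * (if (fun _ : Fin M => q.2) ∈ s then 0 else 1) := by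
        rw [hQ]; simp only [hy, hf']
      have hsum : Q w + (∑' s : Set (Fin M → Y),
          if (fun _ : Fin M => q.2) ∈ s then κ (fun _ : Fin M => q.1) s else 0) = 1 := by
        rw [hQw, ← ENNReal.tsum_add]
        rw [tsum_congr (f := fun s : Set (Fin M → Y) =>
            κ (fun _ : Fin M => q.1) s * (if (fun _ : Fin M => q.2) ∈ s then 0 else 1)
              + (if (fun _ : Fin M => q.2) ∈ s then κ (fun _ : Fin M => q.1) s else 0))
          (g := fun s : Set (Fin M → Y) => κ (fun _ : Fin M => q.1) s)
          (fun s => by by_cases hs : (fun _ : Fin M => q.2) ∈ s <;> simp [hs])]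
        exact (κ (fun _ : Fin M => q.1)).tsum_coe
      rw [tsub_le_iff_right]
      calc (1 : ℝ≥0∞) = Q w + _ := hsum.symm
        _ ≤ Q w + γ := by gcongr
    have perq : ∀ q ∈ pairs, P q ^ M * (1 - γ)
        ≤ ∑' w : Fin M → X × Y,
            (if (∀ i : Fin M, (w i).2 = q.1 ∧ f (w i).1 = q.2)
              then (∏ i, D (w i)) * Q w else 0) := by
      intro q hq
      by_cases hPq : P q = 0
      · rw [hPq, zero_pow (by omega), zero_mul]
        exact zero_le
      · have hPM : P q ^ M = ∑' w : Fin M → X × Y, ∏ i, hfun q (w i) := by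
          rw [aux_tsum_pi_prod (hfun q) M, hPh q]
        rw [hPM, ← ENNReal.tsum_mul_right]
        refine ENNReal.tsum_le_tsum fun w => ?_
        rw [prodh q w]
        by_cases hA : ∀ i : Fin M, (w i).2 = q.1 ∧ f (w i).1 = q.2
        · rw [if_pos hA, if_pos hA]
          exact by gcongr; exact Qbound q hq hPq w hA
        · rw [if_neg hA, if_neg hA, zero_mul]
    calc (∑ q ∈ pairs, P q ^ M) * (1 - γ) = ∑ q ∈ pairs, P q ^ M * (1 - γ) :=
        Finset.sum_mul _ _ _
      _ ≤ ∑ q ∈ pairs, ∑' w : Fin M → X × Y,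
            (if (∀ i : Fin M, (w i).2 = q.1 ∧ f (w i).1 = q.2)
              then (∏ i, D (w i)) * Q w else 0) := Finset.sum_le_sum perq
      _ = ∑' w : Fin M → X × Y, ∑ q ∈ pairs,
            (if (∀ i : Fin M, (w i).2 = q.1 ∧ f (w i).1 = q.2)
              then (∏ i, D (w i)) * Q w else 0) :=
          (Summable.tsum_finsetSum (fun _ _ => ENNReal.summable)).symm
      _ ≤ RP := by
          rw [hRP]
          refine ENNReal.tsum_le_tsum fun w => ?_
          set q0 : Y × Y := ((w i0).2, f (w i0).1) with hq0
          have termle : ∀ q ∈ pairs,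
              (if (∀ i : Fin M, (w i).2 = q.1 ∧ f (w i).1 = q.2)
                then (∏ i, D (w i)) * Q w else 0)
              ≤ (if q = q0 then (∏ i, D (w i)) * Q w else 0) := by
            intro q _
            by_cases hA : ∀ i : Fin M, (w i).2 = q.1 ∧ f (w i).1 = q.2
            · rw [if_pos hA, if_pos (Prod.ext ((hA i0).1).symm ((hA i0).2).symm)]
            · rw [if_neg hA]; exact zero_le
          calc ∑ q ∈ pairs, (if (∀ i : Fin M, (w i).2 = q.1 ∧ f (w i).1 = q.2)
                then (∏ i, D (w i)) * Q w else 0)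
              ≤ ∑ q ∈ pairs, (if q = q0 then (∏ i, D (w i)) * Q w else 0) :=
                Finset.sum_le_sum termle
            _ ≤ ∑ q ∈ (Finset.univ : Finset (Y × Y)),
                  (if q = q0 then (∏ i, D (w i)) * Q w else 0) :=
                Finset.sum_le_sum_of_subset (Finset.filter_subset _ _)
            _ = if q0 ∈ (Finset.univ : Finset (Y × Y)) then (∏ i, D (w i)) * Q w else 0 :=
                Finset.sum_ite_eq' _ _ _
            _ ≤ (∏ i, D (w i)) * Q w := by simp
  -- Final assembly
  have key : R ^ M * (1 - γ) ≤ (c : ℝ≥0∞) ^ (2 * M - 2) * RP := by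
    calc R ^ M * (1 - γ) ≤ ((c : ℝ≥0∞) ^ (2 * M - 2) * ∑ q ∈ pairs, P q ^ M) * (1 - γ) :=
          by gcongr
      _ = (c : ℝ≥0∞) ^ (2 * M - 2) * ((∑ q ∈ pairs, P q ^ M) * (1 - γ)) := by ring
      _ ≤ (c : ℝ≥0∞) ^ (2 * M - 2) * RP := by gcongr
  have h1γ0 : (1 : ℝ≥0∞) - γ ≠ 0 := (tsub_pos_of_lt hγ).ne'
  have h1γtop : (1 : ℝ≥0∞) - γ ≠ ∞ := (lt_of_le_of_lt tsub_le_self ENNReal.one_lt_top).ne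
  have hdiv : R ^ M ≤ ((c : ℝ≥0∞) ^ (2 * M - 2) * RP) / (1 - γ) :=
    (ENNReal.le_div_iff_mul_le (Or.inl h1γ0) (Or.inl h1γtop)).2 key
  have hMne : (M : ℝ) ≠ 0 := by positivity
  have hRrpow : R = (R ^ M) ^ ((M : ℝ)⁻¹) := by
    rw [← ENNReal.rpow_natCast R M, ← ENNReal.rpow_mul, mul_inv_cancel₀ hMne, ENNReal.rpow_one]
  calc R = (R ^ M) ^ ((M : ℝ)⁻¹) := hRrpow
    _ ≤ (((c : ℝ≥0∞) ^ (2 * M - 2) * RP) / (1 - γ)) ^ ((M : ℝ)⁻¹) :=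
        ENNReal.rpow_le_rpow hdiv (by positivity)
    _ = ((c : ℝ≥0∞) ^ (2 * M - 2) * RP) ^ ((M : ℝ)⁻¹) / (1 - γ) ^ ((M : ℝ)⁻¹) :=
        ENNReal.div_rpow_of_nonneg _ _ (by positivity)
    _ ≤ ((c : ℝ≥0∞) ^ (2 * M - 2) * RP) ^ ((M : ℝ)⁻¹) / (1 - γ) := by
        apply ENNReal.div_le_div_left
        calc (1 : ℝ≥0∞) - γ = (1 - γ) ^ (1 : ℝ) := (ENNReal.rpow_one _).symm
          _ ≤ (1 - γ) ^ ((M : ℝ)⁻¹) := by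
              apply ENNReal.rpow_le_rpow_of_exponent_ge tsub_le_self
              rw [inv_le_one_iff₀]
              right; exact_mod_cast hM
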